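/- arXiv:2012.10577 — 3 statements merged into one kernel-verified Lean document; each statement's English description precedes it below -/
import Mathlib

section
/- Let H ∈ C²(ℝ^d) satisfy D²H(p) = ‖D²H(p)‖ · A(p) for all p, where A(p) ≥ λ·I_d (as quadratic forms) for some constant λ > 0. Then for all p, q ∈ ℝ^d, ⟨DH(p) − DH(q), p − q⟩ ≥ λ · |DH(p) − DH(q)| · |p − q|. -/
open scoped RealInnerProductSpace

/-- If `H ∈ C²(ℝ^d)` satisfies `D²H(p) = ‖D²H(p)‖ • A p` with `A p ≥ λ·I` as quadratic
forms, then `⟨DH(p) − DH(q), p − q⟩ ≥ λ·|DH(p) − DH(q)|·|p − q|`. -/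
theorem stmt_0 {d : ℕ} (H : EuclideanSpace ℝ (Fin d) → ℝ) (hH : ContDiff ℝ 2 H)
    (lam : ℝ) (hlam : 0 < lam)
    (A : EuclideanSpace ℝ (Fin d) →
      EuclideanSpace ℝ (Fin d) →L[ℝ] EuclideanSpace ℝ (Fin d))
    (hA : ∀ p, fderiv ℝ (gradient H) p = ‖fderiv ℝ (gradient H) p‖ • A p)
    (hAlb : ∀ p v, lam * ‖v‖ ^ 2 ≤ ⟪A p v, v⟫) :
    ∀ p q : EuclideanSpace ℝ (Fin d),
      lam * (‖gradient H p - gradient H q‖ * ‖p - q‖)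
        ≤ ⟪gradient H p - gradient H q, p - q⟫ := by
  intro p q
  set G := gradient H with hGdef
  have hGc : ContDiff ℝ 1 G := by
    have h1 : ContDiff ℝ 1 (fderiv ℝ H) := hH.fderiv_right (by norm_num)
    exact ((InnerProductSpace.toDual ℝ
      (EuclideanSpace ℝ (Fin d))).symm.contDiff.comp h1 : _)
  set v := p - q with hv
  set γ : ℝ → EuclideanSpace ℝ (Fin d) := fun t => q + t • v with hγ
  have hγ0 : γ 0 = q := by simp [hγ]
  have hγ1 : γ 1 = p := by simp [hγ, hv]
  have hγc : Continuous γ := continuous_const.add (continuous_id.smul continuous_const)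
  have hderiv : ∀ t : ℝ, HasDerivAt (fun t => G (γ t)) (fderiv ℝ G (γ t) v) t := by
    intro t
    have h1 : HasDerivAt γ v t := by
      have h0 := ((hasDerivAt_id t).smul_const v).const_add q
      rw [one_smul] at h0
      exact h0
    have h2 : HasFDerivAt G (fderiv ℝ G (γ t)) (γ t) :=
      (hGc.differentiable one_ne_zero (γ t)).hasFDerivAt
    exact h2.comp_hasDerivAt t h1
  have hfc : Continuous fun t => fderiv ℝ G (γ t) :=
    (hGc.continuous_fderiv one_ne_zero).comp hγc
  have hcd : Continuous fun t => fderiv ℝ G (γ t) v :=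
    (ContinuousLinearMap.apply ℝ (EuclideanSpace ℝ (Fin d)) v).continuous.comp hfc
  have hint : G p - G q = ∫ t in (0:ℝ)..1, fderiv ℝ G (γ t) v := by
    rw [← hγ1, ← hγ0]
    exact (intervalIntegral.integral_eq_sub_of_hasDerivAt (fun t _ => hderiv t)
      (hcd.intervalIntegrable 0 1)).symm
  have key : ∀ t : ℝ, lam * (‖fderiv ℝ G (γ t)‖ * ‖v‖ ^ 2) ≤ ⟪fderiv ℝ G (γ t) v, v⟫ := by
    intro t
    have h1 := hAlb (γ t) v
    have h2 : (0:ℝ) ≤ ‖fderiv ℝ G (γ t)‖ := norm_nonneg _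
    have h3 : ⟪fderiv ℝ G (γ t) v, v⟫ = ‖fderiv ℝ G (γ t)‖ * ⟪A (γ t) v, v⟫ := by
      conv_lhs => rw [hA (γ t)]
      rw [ContinuousLinearMap.smul_apply, real_inner_smul_left]
    rw [h3]
    nlinarith
  have hinner : ⟪G p - G q, v⟫ = ∫ t in (0:ℝ)..1, ⟪fderiv ℝ G (γ t) v, v⟫ := by
    have hcc := ContinuousLinearMap.intervalIntegral_comp_comm (μ := MeasureTheory.volume)
      (innerSL ℝ v) (hcd.intervalIntegrable 0 1)
    simp only [innerSL_apply_apply] at hcc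
    rw [hint, real_inner_comm, ← hcc]
    exact intervalIntegral.integral_congr fun t _ => real_inner_comm _ _
  have hnorm : ‖G p - G q‖ ≤ ∫ t in (0:ℝ)..1, ‖fderiv ℝ G (γ t)‖ * ‖v‖ := by
    rw [hint]
    calc ‖∫ t in (0:ℝ)..1, fderiv ℝ G (γ t) v‖
        ≤ ∫ t in (0:ℝ)..1, ‖fderiv ℝ G (γ t) v‖ :=
          intervalIntegral.norm_integral_le_integral_norm zero_le_one
      _ ≤ ∫ t in (0:ℝ)..1, ‖fderiv ℝ G (γ t)‖ * ‖v‖ := by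
          apply intervalIntegral.integral_mono_on zero_le_one
            (hcd.norm.intervalIntegrable 0 1)
            ((hfc.norm.mul continuous_const).intervalIntegrable 0 1)
          intro t _
          exact (fderiv ℝ G (γ t)).le_opNorm v
  have hmono : lam * ((∫ t in (0:ℝ)..1, ‖fderiv ℝ G (γ t)‖ * ‖v‖) * ‖v‖)
      ≤ ∫ t in (0:ℝ)..1, ⟪fderiv ℝ G (γ t) v, v⟫ := by
    have heq : lam * ((∫ t in (0:ℝ)..1, ‖fderiv ℝ G (γ t)‖ * ‖v‖) * ‖v‖)
        = ∫ t in (0:ℝ)..1, lam * (‖fderiv ℝ G (γ t)‖ * ‖v‖ ^ 2) := by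
      rw [show lam * ((∫ t in (0:ℝ)..1, ‖fderiv ℝ G (γ t)‖ * ‖v‖) * ‖v‖)
          = (lam * ‖v‖) * ∫ t in (0:ℝ)..1, ‖fderiv ℝ G (γ t)‖ * ‖v‖ by ring,
        ← intervalIntegral.integral_const_mul]
      exact intervalIntegral.integral_congr fun t _ => by ring
    rw [heq]
    apply intervalIntegral.integral_mono_on zero_le_one
      ((continuous_const.mul (hfc.norm.mul continuous_const)).intervalIntegrable 0 1)
      ((hcd.inner continuous_const).intervalIntegrable 0 1)
    intro t _
    exact key t
  calc lam * (‖G p - G q‖ * ‖v‖)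
      ≤ lam * ((∫ t in (0:ℝ)..1, ‖fderiv ℝ G (γ t)‖ * ‖v‖) * ‖v‖) := by
        apply mul_le_mul_of_nonneg_left _ hlam.le
        exact mul_le_mul_of_nonneg_right hnorm (norm_nonneg _)
    _ ≤ ∫ t in (0:ℝ)..1, ⟪fderiv ℝ G (γ t) v, v⟫ := hmono
    _ = ⟪G p - G q, v⟫ := hinner.symm
end

section
/- Let L : ℝ^d → ℝ be strictly convex and superlinear, u₀ : ℝ^d → ℝ Lipschitz, t > s > 0, and x ∈ ℝ^d. Suppose y ∈ ℝ^d minimizes w ↦ u₀(w) + t·L((x−w)/t). Define z = (s/t)·x + (1 − s/t)·y. Then y is the unique minimizer over ℝ^d of w ↦ u₀(w) + s·L((z−w)/s). -/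
open Filter

/-- Dynamic programming principle: if `y` minimizes `w ↦ u₀(w) + t·L((x−w)/t)` and
`z = (s/t)x + (1−s/t)y` is an intermediate point of the optimal segment, then `y` is the
unique minimizer of `w ↦ u₀(w) + s·L((z−w)/s)`. -/
theorem stmt_6 {d : ℕ} (L : EuclideanSpace ℝ (Fin d) → ℝ)
    (hconv : StrictConvexOn ℝ Set.univ L)
    (hsuper : Tendsto (fun q : EuclideanSpace ℝ (Fin d) => L q / ‖q‖)
      (comap norm atTop) atTop)
    (u₀ : EuclideanSpace ℝ (Fin d) → ℝ) (M : NNReal) (hu₀ : LipschitzWith M u₀)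
    (s t : ℝ) (hs : 0 < s) (hst : s < t) (x y : EuclideanSpace ℝ (Fin d))
    (hy : ∀ w, u₀ y + t * L (t⁻¹ • (x - y)) ≤ u₀ w + t * L (t⁻¹ • (x - w)))
    (z : EuclideanSpace ℝ (Fin d)) (hz : z = (s / t) • x + (1 - s / t) • y) :
    ∀ w, w ≠ y → u₀ y + s * L (s⁻¹ • (z - y)) < u₀ w + s * L (s⁻¹ • (z - w)) := by
  intro w hw
  have ht : (0:ℝ) < t := hs.trans hst
  have hs0 : s ≠ 0 := hs.ne'
  have ht0 : t ≠ 0 := ht.ne'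
  have hzy : s⁻¹ • (z - y) = t⁻¹ • (x - y) := by
    subst hz
    match_scalars <;> field_simp <;> ring
  have hne : t⁻¹ • (x - y) ≠ s⁻¹ • (z - w) := by
    intro h
    have h2 : s⁻¹ • (z - y) = s⁻¹ • (z - w) := hzy.trans h
    have h3 : z - y = z - w :=
      smul_right_injective (EuclideanSpace ℝ (Fin d)) (inv_ne_zero hs0) h2
    exact hw (sub_right_injective h3).symm
  have hcomb : t⁻¹ • (x - w) =
      (1 - s / t) • (t⁻¹ • (x - y)) + (s / t) • (s⁻¹ • (z - w)) := by
    subst hz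
    match_scalars <;> field_simp <;> ring
  have ha : (0:ℝ) < 1 - s / t := by
    have : s / t < 1 := (div_lt_one ht).2 hst
    linarith
  have hb : (0:ℝ) < s / t := div_pos hs ht
  have hab : (1 - s / t) + s / t = 1 := by ring
  have hkey := hconv.2 (Set.mem_univ (t⁻¹ • (x - y))) (Set.mem_univ (s⁻¹ • (z - w)))
    hne ha hb hab
  rw [← hcomb] at hkey
  set A := L (t⁻¹ • (x - y)) with hA
  set B := L (s⁻¹ • (z - w)) with hB
  have hmul : t * L (t⁻¹ • (x - w)) < t * ((1 - s / t) * A + (s / t) * B) :=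
    mul_lt_mul_of_pos_left hkey ht
  have heq : t * ((1 - s / t) * A + (s / t) * B) = (t - s) * A + s * B := by
    field_simp
  have h1 := hy w
  rw [hzy]
  linarith
end

section
/- Let H(p) = |p|^{2k} on ℝ^d for an integer k ≥ 1. Then H satisfies the uniform directional convexity condition with a dimension-independent bound: there exists λ > 0 (depending only on k) such that for all p ≠ q with DH(p) ≠ DH(q), ⟨DH(p) − DH(q), p − q⟩ ≥ λ · |DH(p) − DH(q)| · |p − q|. -/
open scoped RealInnerProductSpace

section Aux

lemma stmt19_pow_mul_le_aux {a b : ℝ} (ha : 0 ≤ a) (hb : 0 ≤ b) (s : ℕ) :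
    a ^ s * b ≤ a ^ (s + 1) + b ^ (s + 1) := by
  rcases le_total a b with h | h
  · calc a ^ s * b ≤ b ^ s * b := by
          apply mul_le_mul_of_nonneg_right (pow_le_pow_left₀ ha h s) hb
      _ = b ^ (s+1) := by ring
      _ ≤ a ^ (s+1) + b ^ (s+1) := le_add_of_nonneg_left (pow_nonneg ha _)
  · calc a ^ s * b ≤ a ^ s * a := mul_le_mul_of_nonneg_left h (pow_nonneg ha _)
      _ = a ^ (s+1) := by ring
      _ ≤ a ^ (s+1) + b ^ (s+1) := le_add_of_nonneg_right (pow_nonneg hb _)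

lemma stmt19_abs_pow_sub_pow_mul_le {a b : ℝ} (ha : 0 ≤ a) (hb : 0 ≤ b) (s : ℕ) :
    |a ^ s - b ^ s| * b ≤ ((2:ℝ) ^ s - 1) * (a ^ s + b ^ s) * |a - b| := by
  induction s with
  | zero => simp
  | succ s ih =>
    have key : a ^ (s+1) - b ^ (s+1) = a ^ s * (a - b) + (a ^ s - b ^ s) * b := by ring
    have h1 : |a ^ (s+1) - b ^ (s+1)| ≤ a ^ s * |a - b| + |a ^ s - b ^ s| * b := by
      rw [key]
      calc _ ≤ |a ^ s * (a - b)| + |(a ^ s - b ^ s) * b| := abs_add_le _ _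
        _ = a ^ s * |a - b| + |a ^ s - b ^ s| * b := by
            rw [abs_mul, abs_mul, abs_of_nonneg (pow_nonneg ha _), abs_of_nonneg hb]
    have h2 : |a ^ (s+1) - b ^ (s+1)| * b ≤
        (a ^ s * |a - b| + ((2:ℝ) ^ s - 1) * (a ^ s + b ^ s) * |a - b|) * b := by
      apply mul_le_mul_of_nonneg_right _ hb
      exact h1.trans (by linarith)
    refine h2.trans ?_
    have hab := stmt19_pow_mul_le_aux ha hb s
    have hbb : b ^ s * b = b ^ (s+1) := by ring
    have h2s : (1:ℝ) ≤ 2 ^ s := one_le_pow₀ (by norm_num)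
    have habs : 0 ≤ |a - b| := abs_nonneg _
    have hb1 : (0:ℝ) ≤ b ^ (s+1) := pow_nonneg hb _
    have ha1 : (0:ℝ) ≤ a ^ (s+1) := pow_nonneg ha _
    have hX : 0 ≤ (2:ℝ) ^ s - 1 := by linarith
    calc (a ^ s * |a - b| + ((2:ℝ) ^ s - 1) * (a ^ s + b ^ s) * |a - b|) * b
        = 2 ^ s * (a ^ s * b) * |a - b| + (2 ^ s - 1) * b ^ (s + 1) * |a - b| := by
          rw [← hbb]; ring
      _ ≤ 2 ^ s * (a ^ (s + 1) + b ^ (s + 1)) * |a - b| + (2 ^ s - 1) * b ^ (s + 1) * |a - b| := by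
          gcongr
      _ ≤ (2 * (2:ℝ) ^ s - 1) * (a ^ (s + 1) + b ^ (s + 1)) * |a - b| := by
          nlinarith [mul_nonneg (mul_nonneg hX ha1) habs]
      _ = ((2:ℝ) ^ (s + 1) - 1) * (a ^ (s + 1) + b ^ (s + 1)) * |a - b| := by ring

variable {F : Type*} [NormedAddCommGroup F] [InnerProductSpace ℝ F]

lemma stmt19_lower (s : ℕ) (p q : F) :
    (1/2) * (‖p‖ ^ s + ‖q‖ ^ s) * ‖p - q‖ ^ 2
      ≤ ⟪(‖p‖ ^ s) • p - (‖q‖ ^ s) • q, p - q⟫ := by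
  set a := ‖p‖; set b := ‖q‖
  have ha : 0 ≤ a := norm_nonneg _
  have hb : 0 ≤ b := norm_nonneg _
  have hnorm : ‖p - q‖ ^ 2 = a ^ 2 + b ^ 2 - 2 * ⟪p, q⟫ := by
    rw [@norm_sub_sq_real]; ring
  have hinner : ⟪(a ^ s) • p - (b ^ s) • q, p - q⟫
      = a ^ s * a ^ 2 + b ^ s * b ^ 2 - (a ^ s + b ^ s) * ⟪p, q⟫ := by
    simp only [inner_sub_left, inner_sub_right, real_inner_smul_left,
      real_inner_self_eq_norm_sq]
    rw [real_inner_comm q p]; ring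
  rw [hinner, hnorm]
  have key : 0 ≤ (a ^ s - b ^ s) * (a ^ 2 - b ^ 2) := by
    rcases le_total a b with h | h
    · have h1 := pow_le_pow_left₀ ha h s
      have h2 := pow_le_pow_left₀ ha h 2
      nlinarith
    · have h1 := pow_le_pow_left₀ hb h s
      have h2 := pow_le_pow_left₀ hb h 2
      nlinarith
  nlinarith [key]

lemma stmt19_upper (s : ℕ) (p q : F) :
    ‖(‖p‖ ^ s) • p - (‖q‖ ^ s) • q‖ ≤ 2 ^ s * (‖p‖ ^ s + ‖q‖ ^ s) * ‖p - q‖ := by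
  set a := ‖p‖; set b := ‖q‖
  have ha : 0 ≤ a := norm_nonneg _
  have hb : 0 ≤ b := norm_nonneg _
  have hsplit : (a ^ s) • p - (b ^ s) • q = (a ^ s) • (p - q) + (a ^ s - b ^ s) • q := by
    rw [smul_sub, sub_smul]; abel
  have h1 : ‖(a ^ s) • p - (b ^ s) • q‖ ≤ a ^ s * ‖p - q‖ + |a ^ s - b ^ s| * b := by
    rw [hsplit]
    refine (norm_add_le _ _).trans ?_
    rw [norm_smul, norm_smul, Real.norm_eq_abs, Real.norm_eq_abs,
      abs_of_nonneg (pow_nonneg ha s)]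
  have h2 := stmt19_abs_pow_sub_pow_mul_le ha hb s
  have h3 : |a - b| ≤ ‖p - q‖ := abs_norm_sub_norm_le p q
  have h2s : (1:ℝ) ≤ 2 ^ s := one_le_pow₀ (by norm_num)
  have hsum : 0 ≤ a ^ s + b ^ s := by positivity
  calc ‖(a ^ s) • p - (b ^ s) • q‖ ≤ a ^ s * ‖p - q‖ + |a ^ s - b ^ s| * b := h1
    _ ≤ (a ^ s + b ^ s) * ‖p - q‖ + ((2:ℝ) ^ s - 1) * (a ^ s + b ^ s) * |a - b| := by
        have := pow_nonneg hb s
        have h4 : a ^ s * ‖p - q‖ ≤ (a ^ s + b ^ s) * ‖p - q‖ := by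
          apply mul_le_mul_of_nonneg_right (by linarith) (norm_nonneg _)
        linarith [h2]
    _ ≤ (a ^ s + b ^ s) * ‖p - q‖ + ((2:ℝ) ^ s - 1) * (a ^ s + b ^ s) * ‖p - q‖ := by
        gcongr
    _ = 2 ^ s * (a ^ s + b ^ s) * ‖p - q‖ := by ring

lemma stmt19_hasGradient (k : ℕ) (hk : 1 ≤ k) [CompleteSpace F] (p : F) :
    HasGradientAt (fun x : F => ‖x‖ ^ (2 * k)) (((2 * k : ℝ) * ‖p‖ ^ (2 * k - 2)) • p) p := by
  have h1 : HasFDerivAt (fun x : F => ‖x‖ ^ 2) (2 • (innerSL ℝ p)) p :=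
    (hasStrictFDerivAt_norm_sq p).hasFDerivAt
  have hd : HasDerivAt (fun y : ℝ => y ^ k) ((k : ℝ) * (‖p‖ ^ 2) ^ (k - 1)) (‖p‖ ^ 2) :=
    hasDerivAt_pow k _
  have h2 := hd.comp_hasFDerivAt p h1
  have hfun : ((fun y : ℝ => y ^ k) ∘ fun x : F => ‖x‖ ^ 2) = fun x : F => ‖x‖ ^ (2 * k) := by
    funext x; simp [Function.comp, ← pow_mul]
  rw [hfun] at h2
  rw [hasGradientAt_iff_hasFDerivAt]
  convert h2 using 1
  case e'_9 => rfl
  ext y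
  simp only [InnerProductSpace.toDual_apply_apply, inner_smul_left, ContinuousLinearMap.smul_apply,
    innerSL_apply_apply, RCLike.star_def, conj_trivial, smul_eq_mul, two_smul,
    ContinuousLinearMap.add_apply, real_inner_comm]
  have h3 : ‖p‖ ^ (2 * k - 2) = (‖p‖ ^ 2) ^ (k - 1) := by
    rw [← pow_mul]; congr 1; omega
  rw [h3]; ring

end Aux

/-- `H(p) = |p|^{2k}` satisfies the uniform directional convexity condition with a
dimension-independent constant: there is `λ > 0` depending only on `k` such that
`⟨DH(p) − DH(q), p − q⟩ ≥ λ·|DH(p) − DH(q)|·|p − q|` for all `d` and all `p ≠ q`. -/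
theorem stmt_19 (k : ℕ) (hk : 1 ≤ k) :
    ∃ lam : ℝ, 0 < lam ∧ ∀ (d : ℕ) (p q : EuclideanSpace ℝ (Fin d)), p ≠ q →
      gradient (fun x : EuclideanSpace ℝ (Fin d) => ‖x‖ ^ (2 * k)) p ≠
        gradient (fun x : EuclideanSpace ℝ (Fin d) => ‖x‖ ^ (2 * k)) q →
      lam * (‖gradient (fun x : EuclideanSpace ℝ (Fin d) => ‖x‖ ^ (2 * k)) p -
              gradient (fun x : EuclideanSpace ℝ (Fin d) => ‖x‖ ^ (2 * k)) q‖ * ‖p - q‖)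
        ≤ ⟪gradient (fun x : EuclideanSpace ℝ (Fin d) => ‖x‖ ^ (2 * k)) p -
            gradient (fun x : EuclideanSpace ℝ (Fin d) => ‖x‖ ^ (2 * k)) q, p - q⟫ := by
  set s : ℕ := 2 * k - 2 with hs
  refine ⟨1 / 2 ^ (s + 1), by positivity, ?_⟩
  intro d p q hpq _
  have hgp := (stmt19_hasGradient k hk p).gradient
  have hgq := (stmt19_hasGradient k hk q).gradient
  rw [hgp, hgq]
  set c : ℝ := 2 * k with hc
  have hc0 : (0:ℝ) < c := by positivity
  set u : EuclideanSpace ℝ (Fin d) := (‖p‖ ^ s) • p - (‖q‖ ^ s) • q with hu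
  have hdiff : (c * ‖p‖ ^ (2 * k - 2)) • p - (c * ‖q‖ ^ (2 * k - 2)) • q = c • u := by
    rw [hu, smul_sub, smul_smul, smul_smul]
  rw [hdiff]
  have hnormu := stmt19_upper s p q
  have hloweru := stmt19_lower s p q
  have hinner : ⟪c • u, p - q⟫ = c * ⟪u, p - q⟫ := real_inner_smul_left _ _ _
  have hnorm : ‖c • u‖ = c * ‖u‖ := by
    rw [norm_smul, Real.norm_eq_abs, abs_of_pos hc0]
  rw [hinner, hnorm]
  have hpq2 : ‖p - q‖ ^ 2 = ‖p - q‖ * ‖p - q‖ := pow_two _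
  have key : (1 / 2 ^ (s + 1) : ℝ) * (2 ^ s * (‖p‖ ^ s + ‖q‖ ^ s) * ‖p - q‖ * ‖p - q‖)
      = (1/2) * (‖p‖ ^ s + ‖q‖ ^ s) * ‖p - q‖ ^ 2 := by
    have : (2:ℝ) ^ (s + 1) = 2 ^ s * 2 := by ring
    field_simp [this]
    ring
  calc (1 / 2 ^ (s + 1) : ℝ) * (c * ‖u‖ * ‖p - q‖)
      ≤ (1 / 2 ^ (s + 1) : ℝ) * (c * (2 ^ s * (‖p‖ ^ s + ‖q‖ ^ s) * ‖p - q‖) * ‖p - q‖) := by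
        have h1 : (0:ℝ) < 1 / 2 ^ (s + 1) := by positivity
        apply mul_le_mul_of_nonneg_left _ h1.le
        apply mul_le_mul_of_nonneg_right _ (norm_nonneg _)
        exact mul_le_mul_of_nonneg_left hnormu hc0.le
    _ = c * ((1 / 2 ^ (s + 1) : ℝ) * (2 ^ s * (‖p‖ ^ s + ‖q‖ ^ s) * ‖p - q‖ * ‖p - q‖)) := by
        ring
    _ = c * ((1/2) * (‖p‖ ^ s + ‖q‖ ^ s) * ‖p - q‖ ^ 2) := by rw [key]
    _ ≤ c * ⟪u, p - q⟫ := mul_le_mul_of_nonneg_left hloweru hc0.le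
end
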